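/- In the betweenness-reduction graph, for every set of added edges A* ⊆ {(t,S_i) : S_i ∈ S}, every node v ∉ {t, v_e} satisfies B(v) < B(t); hence the node of maximum betweenness is always t or v_e. -/

import Mathlib

/-- Number of shortest paths between `a` and `b` in `G`. -/
noncomputable def numSP {W : Type*} (G : SimpleGraph W) (a b : W) : ℕ :=
  {p : G.Walk a b | p.IsPath ∧ p.length = G.dist a b}.ncard

/-- Number of shortest paths between `a` and `b` in `G` passing through `v`. -/
noncomputable def numSPthrough {W : Type*} (G : SimpleGraph W) (v a b : W) : ℕ :=
  {p : G.Walk a b | p.IsPath ∧ p.length = G.dist a b ∧ v ∈ p.support}.ncard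

/-- Raw betweenness score `B(v)`: the sum over (unordered) pairs of nodes other than `v`
of the fraction of shortest paths between them that pass through `v`. -/
noncomputable def btw {W : Type*} [Fintype W] [DecidableEq W] (G : SimpleGraph W) (v : W) : ℚ :=
  (∑ a : W, ∑ b : W,
    if v ≠ a ∧ v ≠ b ∧ a ≠ b then
      (numSPthrough G v a b : ℚ) / (numSP G a b) else 0) / 2

/-- Vertex type of the betweenness-reduction graph from a 3-Set Cover instance with
universe size `l`, family size `m`, parameter `k`:
`v_e = Sum.inl (Sum.inl ())`, `t = Sum.inl (Sum.inr ())`,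
`w_1 = Sum.inr (Sum.inl (Sum.inl ()))`, `w_2 = Sum.inr (Sum.inl (Sum.inr ()))`,
set nodes `S_i`, universe nodes `u_j`, the clique `X` of size `α = m²l(m+l+2)` and the
clique `Y` of size `β = m²l(k+l+2)`. -/
abbrev BVert (l m k : ℕ) :=
  (Unit ⊕ Unit) ⊕ ((Unit ⊕ Unit) ⊕ ((Fin m ⊕ Fin l) ⊕
    (Fin (m ^ 2 * l * (m + l + 2)) ⊕ Fin (m ^ 2 * l * (k + l + 2)))))

/-- The betweenness-reduction graph with added edges `(t, S_i)` for `i ∈ A`.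
Edges: `(t,v_e)`, `(w_1,w_2)`, every `x_i` adjacent to `t`, every `y_i` adjacent to
`v_e`, every `S_i` adjacent to `v_e` and `w_1` and to its elements in `U`, every `u_j`
adjacent to `w_2`, and `X` and `Y` are cliques. -/
def Bgraph (l m k : ℕ) (S : Fin m → Finset (Fin l)) (A : Finset (Fin m)) :
    SimpleGraph (BVert l m k) :=
  SimpleGraph.fromRel (fun a b =>
    match a, b with
    | Sum.inl (Sum.inl _), Sum.inl (Sum.inr _) => True
    | Sum.inr (Sum.inl (Sum.inl _)), Sum.inr (Sum.inl (Sum.inr _)) => True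
    | Sum.inr (Sum.inr (Sum.inr (Sum.inl _))), Sum.inl (Sum.inr _) => True
    | Sum.inr (Sum.inr (Sum.inr (Sum.inr _))), Sum.inl (Sum.inl _) => True
    | Sum.inr (Sum.inr (Sum.inl (Sum.inl _))), Sum.inl (Sum.inl _) => True
    | Sum.inr (Sum.inr (Sum.inl (Sum.inl _))), Sum.inr (Sum.inl (Sum.inl _)) => True
    | Sum.inr (Sum.inr (Sum.inl (Sum.inl i))), Sum.inr (Sum.inr (Sum.inl (Sum.inr j))) =>
        j ∈ S i
    | Sum.inr (Sum.inr (Sum.inl (Sum.inr _))), Sum.inr (Sum.inl (Sum.inr _)) => True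
    | Sum.inr (Sum.inr (Sum.inr (Sum.inl _))), Sum.inr (Sum.inr (Sum.inr (Sum.inl _))) =>
        True
    | Sum.inr (Sum.inr (Sum.inr (Sum.inr _))), Sum.inr (Sum.inr (Sum.inr (Sum.inr _))) =>
        True
    | Sum.inl (Sum.inr _), Sum.inr (Sum.inr (Sum.inl (Sum.inl i))) => i ∈ A
    | _, _ => False)

open SimpleGraph in
lemma walk_len1 {V : Type*} {G : SimpleGraph V} {a b : V} (p : G.Walk a b) (hp : p.length = 1) :
    ∃ (h1 : G.Adj a b), p = Walk.cons h1 Walk.nil := by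
  cases p with
  | nil => simp at hp
  | cons h1 q =>
    cases q with
    | nil => exact ⟨h1, rfl⟩
    | cons h2 r => simp [SimpleGraph.Walk.length_cons] at hp

open SimpleGraph in
lemma walk_len2 {V : Type*} {G : SimpleGraph V} {a b : V} (p : G.Walk a b) (hp : p.length = 2) :
    ∃ (c : V) (h1 : G.Adj a c) (h2 : G.Adj c b), p = Walk.cons h1 (Walk.cons h2 Walk.nil) := by
  cases p with
  | nil => simp at hp
  | cons h1 q =>
    cases q with
    | nil => simp at hp
    | cons h2 r =>
      cases r with
      | nil => exact ⟨_, h1, h2, rfl⟩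
      | cons h3 s => simp [SimpleGraph.Walk.length_cons] at hp

open SimpleGraph in
lemma walk_len3 {V : Type*} {G : SimpleGraph V} {a b : V} (p : G.Walk a b) (hp : p.length = 3) :
    ∃ (c d : V) (h1 : G.Adj a c) (h2 : G.Adj c d) (h3 : G.Adj d b),
      p = Walk.cons h1 (Walk.cons h2 (Walk.cons h3 Walk.nil)) := by
  cases p with
  | nil => simp at hp
  | cons h1 q =>
    cases q with
    | nil => simp at hp
    | cons h2 r =>
      cases r with
      | nil => simp at hp
      | cons h3 s =>
        cases s with
        | nil => exact ⟨_, _, h1, h2, h3, rfl⟩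
        | cons h4 u => simp [SimpleGraph.Walk.length_cons] at hp

lemma term_nonneg {W : Type*} (G : SimpleGraph W) (v a b : W) :
    0 ≤ (numSPthrough G v a b : ℚ) / (numSP G a b) := by positivity

lemma term_le_one {W : Type*} (G : SimpleGraph W) (v a b : W) :
    (numSPthrough G v a b : ℚ) / (numSP G a b) ≤ 1 := by
  rcases eq_or_ne (numSP G a b) 0 with h | h
  · simp [h]
  · rw [div_le_one (by exact_mod_cast Nat.pos_of_ne_zero h)]
    have hfin : {p : G.Walk a b | p.IsPath ∧ p.length = G.dist a b}.Finite := by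
      by_contra hinf
      exact h (Set.Infinite.ncard hinf)
    have hsub : {p : G.Walk a b | p.IsPath ∧ p.length = G.dist a b ∧ v ∈ p.support}
        ⊆ {p : G.Walk a b | p.IsPath ∧ p.length = G.dist a b} := by
      intro p hp; exact ⟨hp.1, hp.2.1⟩
    exact_mod_cast Set.ncard_le_ncard hsub hfin

open SimpleGraph in
lemma reverse_inj {V : Type*} {G : SimpleGraph V} {a b : V} :
    Function.Injective (Walk.reverse : G.Walk a b → G.Walk b a) := by
  intro p q h
  rw [← Walk.reverse_reverse p, h, Walk.reverse_reverse]

open SimpleGraph in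
lemma numSP_comm {W : Type*} (G : SimpleGraph W) (a b : W) : numSP G a b = numSP G b a := by
  unfold numSP
  rw [show {p : G.Walk b a | p.IsPath ∧ p.length = G.dist b a}
      = Walk.reverse '' {p : G.Walk a b | p.IsPath ∧ p.length = G.dist a b} from ?_]
  · rw [Set.ncard_image_of_injective _ reverse_inj]
  · ext q
    constructor
    · rintro ⟨hq1, hq2⟩
      exact ⟨q.reverse, ⟨hq1.reverse, by simp [hq2, SimpleGraph.dist_comm]⟩, by simp⟩
    · rintro ⟨p, ⟨hp1, hp2⟩, rfl⟩
      exact ⟨hp1.reverse, by simp [hp2, SimpleGraph.dist_comm]⟩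

open SimpleGraph in
lemma numSPthrough_comm {W : Type*} (G : SimpleGraph W) (v a b : W) :
    numSPthrough G v a b = numSPthrough G v b a := by
  unfold numSPthrough
  rw [show {p : G.Walk b a | p.IsPath ∧ p.length = G.dist b a ∧ v ∈ p.support}
      = Walk.reverse '' {p : G.Walk a b | p.IsPath ∧ p.length = G.dist a b ∧ v ∈ p.support} from ?_]
  · rw [Set.ncard_image_of_injective _ reverse_inj]
  · ext q
    constructor
    · rintro ⟨hq1, hq2, hq3⟩
      exact ⟨q.reverse, ⟨hq1.reverse, by simp [hq2, SimpleGraph.dist_comm],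
        by simp [Walk.support_reverse, hq3]⟩, by simp⟩
    · rintro ⟨p, ⟨hp1, hp2, hp3⟩, rfl⟩
      exact ⟨hp1.reverse, by simp [hp2, SimpleGraph.dist_comm],
        by simp [Walk.support_reverse, hp3]⟩
open SimpleGraph in
lemma adj_case {V : Type*} {G : SimpleGraph V} {a b : V} (hadj : G.Adj a b)
    (p : G.Walk a b) (hl : p.length = G.dist a b) :
    ∀ z ∈ p.support, z = a ∨ z = b := by
  have hd : G.dist a b = 1 := SimpleGraph.dist_eq_one_iff_adj.mpr hadj
  obtain ⟨h1, rfl⟩ := walk_len1 p (by rw [hl, hd])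
  intro z hz
  simpa using hz

open SimpleGraph in
lemma dist2_case {V : Type*} {G : SimpleGraph V} {a b c0 : V} (hd : G.dist a b = 2)
    (huniq : ∀ c, G.Adj a c → G.Adj c b → c = c0)
    (p : G.Walk a b) (hl : p.length = G.dist a b) :
    ∀ z ∈ p.support, z = a ∨ z = c0 ∨ z = b := by
  obtain ⟨c, h1, h2, rfl⟩ := walk_len2 p (by rw [hl, hd])
  have hc : c = c0 := huniq c h1 h2
  intro z hz
  simp only [Walk.support_cons, Walk.support_nil, List.mem_cons, List.mem_singleton] at hz
  subst hc
  tauto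

open SimpleGraph in
lemma dist3_case {V : Type*} {G : SimpleGraph V} {a b c0 d0 : V} (hd : G.dist a b = 3)
    (huniq : ∀ c d, G.Adj a c → G.Adj c d → G.Adj d b → c = c0 ∧ d = d0)
    (p : G.Walk a b) (hl : p.length = G.dist a b) :
    ∀ z ∈ p.support, z = a ∨ z = c0 ∨ z = d0 ∨ z = b := by
  obtain ⟨c, d, h1, h2, h3, rfl⟩ := walk_len3 p (by rw [hl, hd])
  obtain ⟨hc, hdd⟩ := huniq c d h1 h2 h3
  intro z hz
  simp only [Walk.support_cons, Walk.support_nil, List.mem_cons, List.mem_singleton] at hz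
  subst hc; subst hdd
  tauto
namespace BB

open SimpleGraph

variable (l m k : ℕ) (S : Fin m → Finset (Fin l)) (A : Finset (Fin m))

def tV : BVert l m k := Sum.inl (Sum.inr ())
def veV : BVert l m k := Sum.inl (Sum.inl ())
def xV (p : Fin (m ^ 2 * l * (m + l + 2))) : BVert l m k :=
  Sum.inr (Sum.inr (Sum.inr (Sum.inl p)))
def yV (q : Fin (m ^ 2 * l * (k + l + 2))) : BVert l m k :=
  Sum.inr (Sum.inr (Sum.inr (Sum.inr q)))

lemma adj_tve : (Bgraph l m k S A).Adj (tV l m k) (veV l m k) := by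
  simp [Bgraph, SimpleGraph.fromRel_adj, tV, veV]

lemma adj_tx (p) : (Bgraph l m k S A).Adj (tV l m k) (xV l m k p) := by
  simp [Bgraph, SimpleGraph.fromRel_adj, tV, xV]

lemma adj_vey (q) : (Bgraph l m k S A).Adj (veV l m k) (yV l m k q) := by
  simp [Bgraph, SimpleGraph.fromRel_adj, veV, yV]

lemma mid_ty (q) : ∀ c, (Bgraph l m k S A).Adj (tV l m k) c →
    (Bgraph l m k S A).Adj c (yV l m k q) → c = veV l m k := by
  intro c
  rcases c with (⟨⟩|⟨⟩)|((⟨⟩|⟨⟩)|((i|j)|(xp|yq))) <;>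
    (intro h1 h2; simp_all [Bgraph, SimpleGraph.fromRel_adj, tV, veV, xV, yV])

lemma mid_vx (p) : ∀ c, (Bgraph l m k S A).Adj (veV l m k) c →
    (Bgraph l m k S A).Adj c (xV l m k p) → c = tV l m k := by
  intro c
  rcases c with (⟨⟩|⟨⟩)|((⟨⟩|⟨⟩)|((i|j)|(xp|yq))) <;>
    (intro h1 h2; simp_all [Bgraph, SimpleGraph.fromRel_adj, tV, veV, xV, yV])

lemma mid_xy (p q) : ∀ c d, (Bgraph l m k S A).Adj (xV l m k p) c →
    (Bgraph l m k S A).Adj c d → (Bgraph l m k S A).Adj d (yV l m k q) →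
    c = tV l m k ∧ d = veV l m k := by
  intro c d
  rcases c with (⟨⟩|⟨⟩)|((⟨⟩|⟨⟩)|((i|j)|(xp|yq))) <;>
  rcases d with (⟨⟩|⟨⟩)|((⟨⟩|⟨⟩)|((i'|j')|(xp'|yq'))) <;>
    (intro h1 h2 h3; simp_all [Bgraph, SimpleGraph.fromRel_adj, tV, veV, xV, yV])

lemma nocommon_xy (p q) : ∀ c, (Bgraph l m k S A).Adj (xV l m k p) c →
    (Bgraph l m k S A).Adj c (yV l m k q) → False := by
  intro c
  rcases c with (⟨⟩|⟨⟩)|((⟨⟩|⟨⟩)|((i|j)|(xp|yq))) <;>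
    (intro h1 h2; simp_all [Bgraph, SimpleGraph.fromRel_adj, tV, veV, xV, yV])

lemma dist_ty (q) : (Bgraph l m k S A).dist (tV l m k) (yV l m k q) = 2 := by
  have w : (Bgraph l m k S A).Walk (tV l m k) (yV l m k q) :=
    Walk.cons (adj_tve l m k S A) (Walk.cons (adj_vey l m k S A q) Walk.nil)
  have h2 : (Bgraph l m k S A).dist (tV l m k) (yV l m k q) ≤ 2 := by
    have := SimpleGraph.dist_le (Walk.cons (adj_tve l m k S A)
      (Walk.cons (adj_vey l m k S A q) Walk.nil))
    simpa using this
  have h0 : 0 < (Bgraph l m k S A).dist (tV l m k) (yV l m k q) :=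
    Reachable.pos_dist_of_ne ⟨w⟩ (by simp [tV, yV])
  have h1 : (Bgraph l m k S A).dist (tV l m k) (yV l m k q) ≠ 1 := by
    rw [Ne, SimpleGraph.dist_eq_one_iff_adj]
    simp [Bgraph, SimpleGraph.fromRel_adj, tV, yV]
  omega

lemma dist_vx (p) : (Bgraph l m k S A).dist (veV l m k) (xV l m k p) = 2 := by
  have w : (Bgraph l m k S A).Walk (veV l m k) (xV l m k p) :=
    Walk.cons (adj_tve l m k S A).symm (Walk.cons (adj_tx l m k S A p) Walk.nil)
  have h2 : (Bgraph l m k S A).dist (veV l m k) (xV l m k p) ≤ 2 := by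
    have := SimpleGraph.dist_le (Walk.cons (adj_tve l m k S A).symm
      (Walk.cons (adj_tx l m k S A p) Walk.nil))
    simpa using this
  have h0 : 0 < (Bgraph l m k S A).dist (veV l m k) (xV l m k p) :=
    Reachable.pos_dist_of_ne ⟨w⟩ (by simp [veV, xV])
  have h1 : (Bgraph l m k S A).dist (veV l m k) (xV l m k p) ≠ 1 := by
    rw [Ne, SimpleGraph.dist_eq_one_iff_adj]
    simp [Bgraph, SimpleGraph.fromRel_adj, veV, xV]
  omega

lemma dist_xy (p q) : (Bgraph l m k S A).dist (xV l m k p) (yV l m k q) = 3 := by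
  have w : (Bgraph l m k S A).Walk (xV l m k p) (yV l m k q) :=
    Walk.cons (adj_tx l m k S A p).symm
      (Walk.cons (adj_tve l m k S A) (Walk.cons (adj_vey l m k S A q) Walk.nil))
  have h3 : (Bgraph l m k S A).dist (xV l m k p) (yV l m k q) ≤ 3 := by
    have := SimpleGraph.dist_le (Walk.cons (adj_tx l m k S A p).symm
      (Walk.cons (adj_tve l m k S A) (Walk.cons (adj_vey l m k S A q) Walk.nil)))
    simpa using this
  have h0 : 0 < (Bgraph l m k S A).dist (xV l m k p) (yV l m k q) :=
    Reachable.pos_dist_of_ne ⟨w⟩ (by simp [xV, yV])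
  have h1 : (Bgraph l m k S A).dist (xV l m k p) (yV l m k q) ≠ 1 := by
    rw [Ne, SimpleGraph.dist_eq_one_iff_adj]
    simp [Bgraph, SimpleGraph.fromRel_adj, xV, yV]
  have h2 : (Bgraph l m k S A).dist (xV l m k p) (yV l m k q) ≠ 2 := by
    intro hd
    obtain ⟨w2, hw2⟩ := SimpleGraph.exists_walk_of_dist_ne_zero
      (G := Bgraph l m k S A) (u := xV l m k p) (v := yV l m k q) (by omega)
    rw [hd] at hw2
    obtain ⟨c, hc1, hc2, rfl⟩ := walk_len2 w2 hw2
    exact nocommon_xy l m k S A p q c hc1 hc2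
  omega

end BB
namespace BB

open SimpleGraph

variable (l m k : ℕ) (S : Fin m → Finset (Fin l)) (A : Finset (Fin m))

/-- the canonical shortest path x - t - ve - y -/
noncomputable def w0 (p) (q) : (Bgraph l m k S A).Walk (xV l m k p) (yV l m k q) :=
  Walk.cons (adj_tx l m k S A p).symm
    (Walk.cons (adj_tve l m k S A) (Walk.cons (adj_vey l m k S A q) Walk.nil))

lemma sp_xy (p q) :
    {w : (Bgraph l m k S A).Walk (xV l m k p) (yV l m k q) |
      w.IsPath ∧ w.length = (Bgraph l m k S A).dist (xV l m k p) (yV l m k q)}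
      = {w0 l m k S A p q} := by
  ext w
  constructor
  · rintro ⟨hp, hl⟩
    rw [dist_xy] at hl
    obtain ⟨c, d, h1, h2, h3, rfl⟩ := walk_len3 w hl
    obtain ⟨rfl, rfl⟩ := mid_xy l m k S A p q c d h1 h2 h3
    rfl
  · rintro rfl
    refine ⟨?_, ?_⟩
    · rw [SimpleGraph.Walk.isPath_def]
      simp only [w0, Walk.support_cons, Walk.support_nil]
      simp [w0, tV, veV, xV, yV]
    · simp [w0, dist_xy]

lemma numSP_xy (p q) :
    numSP (Bgraph l m k S A) (xV l m k p) (yV l m k q) = 1 := by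
  unfold numSP
  rw [sp_xy]
  exact Set.ncard_singleton _

lemma numSPthrough_xy (p q) :
    numSPthrough (Bgraph l m k S A) (tV l m k) (xV l m k p) (yV l m k q) = 1 := by
  unfold numSPthrough
  have : {w : (Bgraph l m k S A).Walk (xV l m k p) (yV l m k q) |
      w.IsPath ∧ w.length = (Bgraph l m k S A).dist (xV l m k p) (yV l m k q)
        ∧ tV l m k ∈ w.support} = {w0 l m k S A p q} := by
    ext w
    constructor
    · rintro ⟨hp, hl, -⟩
      have := (sp_xy l m k S A p q).subset ⟨hp, hl⟩
      simpa using this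
    · rintro rfl
      have h := (sp_xy l m k S A p q).symm.subset rfl
      refine ⟨h.1, h.2, ?_⟩
      simp [w0]
  rw [this]
  exact Set.ncard_singleton _

def inC : BVert l m k → Prop := fun v =>
  match v with
  | Sum.inl _ => True
  | Sum.inr (Sum.inr (Sum.inr _)) => True
  | _ => False

lemma core_support (a b : BVert l m k) (ha : inC l m k a) (hb : inC l m k b) (hab : a ≠ b)
    (w : (Bgraph l m k S A).Walk a b) (hl : w.length = (Bgraph l m k S A).dist a b) :
    ∀ z ∈ w.support, z = a ∨ z = tV l m k ∨ z = veV l m k ∨ z = b := by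
  rcases a with (⟨⟩|⟨⟩)|((⟨⟩|⟨⟩)|((i|j)|(xp|yq)))
  · -- a = ve
    rcases b with (⟨⟩|⟨⟩)|((⟨⟩|⟨⟩)|((i'|j')|(xp'|yq')))
    · exact absurd rfl hab
    · -- (ve, t) adjacent
      intro z hz
      have := adj_case (adj_tve l m k S A).symm w hl z hz
      unfold tV veV at *; tauto
    · exact absurd hb (by simp [inC])
    · exact absurd hb (by simp [inC])
    · exact absurd hb (by simp [inC])
    · exact absurd hb (by simp [inC])
    · -- (ve, x) dist 2 via t
      intro z hz
      have := dist2_case (dist_vx l m k S A xp') (mid_vx l m k S A xp') w hl z hz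
      unfold tV veV xV at *; tauto
    · -- (ve, y) adjacent
      intro z hz
      have := adj_case (adj_vey l m k S A yq') w hl z hz
      unfold veV yV at *; tauto
  · -- a = t
    rcases b with (⟨⟩|⟨⟩)|((⟨⟩|⟨⟩)|((i'|j')|(xp'|yq')))
    · -- (t, ve) adjacent
      intro z hz
      have := adj_case (adj_tve l m k S A) w hl z hz
      unfold tV veV at *; tauto
    · exact absurd rfl hab
    · exact absurd hb (by simp [inC])
    · exact absurd hb (by simp [inC])
    · exact absurd hb (by simp [inC])
    · exact absurd hb (by simp [inC])
    · -- (t, x) adjacent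
      intro z hz
      have := adj_case (adj_tx l m k S A xp') w hl z hz
      unfold tV xV at *; tauto
    · -- (t, y) dist 2 via ve
      intro z hz
      have := dist2_case (dist_ty l m k S A yq') (mid_ty l m k S A yq') w hl z hz
      unfold tV veV yV at *; tauto
  · exact absurd ha (by simp [inC])
  · exact absurd ha (by simp [inC])
  · exact absurd ha (by simp [inC])
  · exact absurd ha (by simp [inC])
  · -- a = x
    rcases b with (⟨⟩|⟨⟩)|((⟨⟩|⟨⟩)|((i'|j')|(xp'|yq')))
    · -- (x, ve) dist 2 via t
      intro z hz
      have hd : (Bgraph l m k S A).dist (xV l m k xp) (veV l m k) = 2 := by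
        rw [SimpleGraph.dist_comm]; exact dist_vx l m k S A xp
      have hm : ∀ c, (Bgraph l m k S A).Adj (xV l m k xp) c →
          (Bgraph l m k S A).Adj c (veV l m k) → c = tV l m k :=
        fun c h1 h2 => mid_vx l m k S A xp c h2.symm h1.symm
      have := dist2_case hd hm w hl z hz
      unfold tV veV xV at *; tauto
    · -- (x, t) adjacent
      intro z hz
      have := adj_case (adj_tx l m k S A xp).symm w hl z hz
      unfold tV xV at *; tauto
    · exact absurd hb (by simp [inC])
    · exact absurd hb (by simp [inC])
    · exact absurd hb (by simp [inC])
    · exact absurd hb (by simp [inC])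
    · -- (x, x') adjacent
      intro z hz
      have hne : xp ≠ xp' := fun h => hab (by rw [h])
      have hadj : (Bgraph l m k S A).Adj (xV l m k xp) (xV l m k xp') := by
        simp [Bgraph, SimpleGraph.fromRel_adj, xV]
        exact hne
      have := adj_case hadj w hl z hz
      unfold xV at *; tauto
    · -- (x, y) dist 3
      intro z hz
      have := dist3_case (dist_xy l m k S A xp yq') (mid_xy l m k S A xp yq') w hl z hz
      unfold tV veV xV yV at *; tauto
  · -- a = y
    rcases b with (⟨⟩|⟨⟩)|((⟨⟩|⟨⟩)|((i'|j')|(xp'|yq')))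
    · -- (y, ve) adjacent
      intro z hz
      have := adj_case (adj_vey l m k S A yq).symm w hl z hz
      unfold veV yV at *; tauto
    · -- (y, t) dist 2 via ve
      intro z hz
      have hd : (Bgraph l m k S A).dist (yV l m k yq) (tV l m k) = 2 := by
        rw [SimpleGraph.dist_comm]; exact dist_ty l m k S A yq
      have hm : ∀ c, (Bgraph l m k S A).Adj (yV l m k yq) c →
          (Bgraph l m k S A).Adj c (tV l m k) → c = veV l m k :=
        fun c h1 h2 => mid_ty l m k S A yq c h2.symm h1.symm
      have := dist2_case hd hm w hl z hz
      unfold tV veV yV at *; tauto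
    · exact absurd hb (by simp [inC])
    · exact absurd hb (by simp [inC])
    · exact absurd hb (by simp [inC])
    · exact absurd hb (by simp [inC])
    · -- (y, x) dist 3
      intro z hz
      have hd : (Bgraph l m k S A).dist (yV l m k yq) (xV l m k xp') = 3 := by
        rw [SimpleGraph.dist_comm]; exact dist_xy l m k S A xp' yq
      have hm : ∀ c d, (Bgraph l m k S A).Adj (yV l m k yq) c →
          (Bgraph l m k S A).Adj c d → (Bgraph l m k S A).Adj d (xV l m k xp') →
          c = veV l m k ∧ d = tV l m k := by
        intro c d h1 h2 h3
        obtain ⟨hd', hc'⟩ := mid_xy l m k S A xp' yq d c h3.symm h2.symm h1.symm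
        exact ⟨hc', hd'⟩
      have := dist3_case hd hm w hl z hz
      unfold tV veV xV yV at *; tauto
    · -- (y, y') adjacent
      intro z hz
      have hne : yq ≠ yq' := fun h => hab (by rw [h])
      have hadj : (Bgraph l m k S A).Adj (yV l m k yq) (yV l m k yq') := by
        simp [Bgraph, SimpleGraph.fromRel_adj, yV]
        exact hne
      have := adj_case hadj w hl z hz
      unfold yV at *; tauto

lemma through_zero (v a b : BVert l m k) (ha : inC l m k a) (hb : inC l m k b) (hab : a ≠ b)
    (hv1 : v ≠ tV l m k) (hv2 : v ≠ veV l m k) (hva : v ≠ a) (hvb : v ≠ b) :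
    numSPthrough (Bgraph l m k S A) v a b = 0 := by
  unfold numSPthrough
  have : {w : (Bgraph l m k S A).Walk a b |
      w.IsPath ∧ w.length = (Bgraph l m k S A).dist a b ∧ v ∈ w.support} = ∅ := by
    rw [Set.eq_empty_iff_forall_notMem]
    rintro w ⟨hp, hl, hmem⟩
    rcases core_support l m k S A a b ha hb hab w hl v hmem with h | h | h | h
    · exact hva h
    · exact hv1 h
    · exact hv2 h
    · exact hvb h
  rw [this]
  exact Set.ncard_empty _

end BB
namespace BB

open SimpleGraph

variable (l m k : ℕ) (S : Fin m → Finset (Fin l)) (A : Finset (Fin m))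

open Classical in
noncomputable def F (v a b : BVert l m k) : ℚ :=
  if v ≠ a ∧ v ≠ b ∧ a ≠ b then
    (numSPthrough (Bgraph l m k S A) v a b : ℚ) / (numSP (Bgraph l m k S A) a b) else 0

lemma btw_eq (v : BVert l m k) :
    btw (Bgraph l m k S A) v
      = (∑ a : BVert l m k, ∑ b : BVert l m k, F l m k S A v a b) / 2 := by
  unfold _root_.btw F
  congr 1
  refine Finset.sum_congr rfl fun a _ => Finset.sum_congr rfl fun b _ => ?_
  by_cases h : v ≠ a ∧ v ≠ b ∧ a ≠ b <;> simp [h]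

lemma F_nonneg (v a b : BVert l m k) : 0 ≤ F l m k S A v a b := by
  unfold F
  split_ifs with h
  · exact term_nonneg _ _ _ _
  · exact le_rfl

lemma F_le_one (v a b : BVert l m k) : F l m k S A v a b ≤ 1 := by
  unfold F
  split_ifs with h
  · exact term_le_one _ _ _ _
  · norm_num

def chiX : BVert l m k → ℚ :=
  Sum.elim (fun _ => 0) (Sum.elim (fun _ => 0)
    (Sum.elim (fun _ => 0) (Sum.elim (fun _ => 1) (fun _ => 0))))

def chiY : BVert l m k → ℚ :=
  Sum.elim (fun _ => 0) (Sum.elim (fun _ => 0)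
    (Sum.elim (fun _ => 0) (Sum.elim (fun _ => 0) (fun _ => 1))))

def chiC : BVert l m k → ℚ :=
  Sum.elim (fun _ => 1) (Sum.elim (fun _ => 0)
    (Sum.elim (fun _ => 0) (fun _ => 1)))

lemma sum_chiX : ∑ v : BVert l m k, chiX l m k v = ((m ^ 2 * l * (m + l + 2) : ℕ) : ℚ) := by
  simp [chiX, Fintype.sum_sum_type]

lemma sum_chiY : ∑ v : BVert l m k, chiY l m k v = ((m ^ 2 * l * (k + l + 2) : ℕ) : ℚ) := by
  simp [chiY, Fintype.sum_sum_type]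

lemma sum_chiC : ∑ v : BVert l m k, chiC l m k v
    = ((m ^ 2 * l * (m + l + 2) + m ^ 2 * l * (k + l + 2) + 2 : ℕ) : ℚ) := by
  simp [chiC, Fintype.sum_sum_type]
  push_cast
  ring

lemma sum_one : ∑ _v : BVert l m k, (1 : ℚ)
    = ((m ^ 2 * l * (m + l + 2) + m ^ 2 * l * (k + l + 2) + m + l + 4 : ℕ) : ℚ) := by
  simp [Fintype.sum_sum_type]
  push_cast
  ring

lemma chiC_cases (v : BVert l m k) : chiC l m k v = 0 ∨ chiC l m k v = 1 := by
  rcases v with (⟨⟩|⟨⟩)|((⟨⟩|⟨⟩)|((i|j)|(xp|yq))) <;> simp [chiC]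

lemma inC_of_chiC (v : BVert l m k) (h : chiC l m k v = 1) : inC l m k v := by
  rcases v with (⟨⟩|⟨⟩)|((⟨⟩|⟨⟩)|((i|j)|(xp|yq))) <;> simp_all [chiC, inC]

lemma Fxy (p q) : F l m k S A (tV l m k) (xV l m k p) (yV l m k q) = 1 := by
  unfold F
  rw [if_pos ⟨by simp [tV, xV], by simp [tV, yV], by simp [xV, yV]⟩,
    numSP_xy, numSPthrough_xy]
  norm_num

lemma Fyx (p q) : F l m k S A (tV l m k) (yV l m k q) (xV l m k p) = 1 := by
  unfold F
  rw [if_pos ⟨by simp [tV, yV], by simp [tV, xV], by simp [xV, yV]⟩,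
    numSP_comm, numSPthrough_comm, numSP_xy, numSPthrough_xy]
  norm_num

lemma ptLB (a b : BVert l m k) :
    chiX l m k a * chiY l m k b + chiY l m k a * chiX l m k b
      ≤ F l m k S A (tV l m k) a b := by
  rcases a with (⟨⟩|⟨⟩)|((⟨⟩|⟨⟩)|((i|j)|(xp|yq))) <;>
  rcases b with (⟨⟩|⟨⟩)|((⟨⟩|⟨⟩)|((i'|j')|(xp'|yq'))) <;>
    simp [chiX, chiY] <;>
    first
      | exact F_nonneg l m k S A _ _ _
      | exact (Fxy l m k S A _ _).ge
      | exact (Fyx l m k S A _ _).ge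

lemma ptUB (v a b : BVert l m k) (hv1 : v ≠ tV l m k) (hv2 : v ≠ veV l m k) :
    F l m k S A v a b ≤ 1 - chiC l m k a * chiC l m k b := by
  rcases chiC_cases l m k a with h | h
  · rw [h]
    norm_num
    exact F_le_one l m k S A v a b
  · rcases chiC_cases l m k b with g | g
    · rw [h, g]
      norm_num
      exact F_le_one l m k S A v a b
    · rw [h, g]
      norm_num
      unfold F
      split_ifs with hc
      · rcases hc with ⟨h1, h2, h3⟩
        rw [through_zero l m k S A v a b (inC_of_chiC l m k a h) (inC_of_chiC l m k b g)
          h3 hv1 hv2 h1 h2]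
        norm_num
      · exact le_rfl

lemma sum_mul_sum' (f g : BVert l m k → ℚ) :
    ∑ a : BVert l m k, ∑ b : BVert l m k, f a * g b
      = (∑ a : BVert l m k, f a) * (∑ b : BVert l m k, g b) := by
  rw [Finset.sum_mul]
  exact Finset.sum_congr rfl fun a _ => by rw [Finset.mul_sum]

lemma btw_t_lb :
    ((m ^ 2 * l * (m + l + 2) : ℕ) : ℚ) * ((m ^ 2 * l * (k + l + 2) : ℕ) : ℚ)
      ≤ btw (Bgraph l m k S A) (tV l m k) := by
  rw [btw_eq]
  have hs : ∑ a : BVert l m k, ∑ b : BVert l m k,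
      (chiX l m k a * chiY l m k b + chiY l m k a * chiX l m k b)
      ≤ ∑ a : BVert l m k, ∑ b : BVert l m k, F l m k S A (tV l m k) a b :=
    Finset.sum_le_sum fun a _ => Finset.sum_le_sum fun b _ => ptLB l m k S A a b
  have he : ∑ a : BVert l m k, ∑ b : BVert l m k,
      (chiX l m k a * chiY l m k b + chiY l m k a * chiX l m k b)
      = 2 * (((m ^ 2 * l * (m + l + 2) : ℕ) : ℚ) * ((m ^ 2 * l * (k + l + 2) : ℕ) : ℚ)) := by
    simp only [Finset.sum_add_distrib]
    rw [sum_mul_sum', sum_mul_sum', sum_chiX, sum_chiY]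
    ring
  rw [he] at hs
  linarith

lemma btw_v_ub (v : BVert l m k) (hv1 : v ≠ tV l m k) (hv2 : v ≠ veV l m k) :
    btw (Bgraph l m k S A) v ≤
      (((m ^ 2 * l * (m + l + 2) + m ^ 2 * l * (k + l + 2) + m + l + 4 : ℕ) : ℚ) ^ 2
        - ((m ^ 2 * l * (m + l + 2) + m ^ 2 * l * (k + l + 2) + 2 : ℕ) : ℚ) ^ 2) / 2 := by
  rw [btw_eq]
  have hs : ∑ a : BVert l m k, ∑ b : BVert l m k, F l m k S A v a b
      ≤ ∑ a : BVert l m k, ∑ b : BVert l m k, (1 - chiC l m k a * chiC l m k b) :=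
    Finset.sum_le_sum fun a _ => Finset.sum_le_sum fun b _ => ptUB l m k S A v a b hv1 hv2
  have he : ∑ a : BVert l m k, ∑ b : BVert l m k, (1 - chiC l m k a * chiC l m k b)
      = ((m ^ 2 * l * (m + l + 2) + m ^ 2 * l * (k + l + 2) + m + l + 4 : ℕ) : ℚ) ^ 2
        - ((m ^ 2 * l * (m + l + 2) + m ^ 2 * l * (k + l + 2) + 2 : ℕ) : ℚ) ^ 2 := by
    simp only [Finset.sum_sub_distrib]
    have h1 : ∑ a : BVert l m k, ∑ b : BVert l m k, (1:ℚ)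
        = ((m ^ 2 * l * (m + l + 2) + m ^ 2 * l * (k + l + 2) + m + l + 4 : ℕ) : ℚ) ^ 2 := by
      have := sum_mul_sum' l m k (fun _ => (1:ℚ)) (fun _ => (1:ℚ))
      simp only [mul_one] at this
      rw [this, sum_one]
      ring
    rw [h1, sum_mul_sum', sum_chiC]
    ring
  rw [he] at hs
  linarith

lemma arith_gen (M P K : ℚ) (hM : 4 ≤ M) (hK : 4 ≤ K) (hP2 : 0 < P) (hP : P ≤ 2*M) :
    ((M*P+M*K+P+2)^2 - (M*P+M*K+2)^2)/2 < (M*P)*(M*K) := by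
  have key : M*P + M*K + 2 + P/2 < M*(M*K) := by
    have h1 : M*P ≤ 2*(M*M) := by nlinarith
    have h2 : 2*(M*M) + M*K + 2 + M < M*(M*K) := by
      nlinarith [mul_le_mul_of_nonneg_left hK (by nlinarith : (0:ℚ) ≤ M*M - 2*M - M - 1)]
    linarith
  have expand : ((M*P+M*K+P+2)^2 - (M*P+M*K+2)^2)/2 = P*(M*P + M*K + 2 + P/2) := by ring
  rw [expand]
  calc P*(M*P + M*K + 2 + P/2) < P*(M*(M*K)) := mul_lt_mul_of_pos_left key hP2
    _ = (M*P)*(M*K) := by ring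

lemma arith (hl : 1 ≤ l) (hk : 1 ≤ k) (hkm : k < m) :
    (((m ^ 2 * l * (m + l + 2) + m ^ 2 * l * (k + l + 2) + m + l + 4 : ℕ) : ℚ) ^ 2
        - ((m ^ 2 * l * (m + l + 2) + m ^ 2 * l * (k + l + 2) + 2 : ℕ) : ℚ) ^ 2) / 2
      < ((m ^ 2 * l * (m + l + 2) : ℕ) : ℚ) * ((m ^ 2 * l * (k + l + 2) : ℕ) : ℚ) := by
  have hm2 : 2 ≤ m := by omega
  have hmq : (2:ℚ) ≤ (m:ℚ) := by exact_mod_cast hm2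
  have hlq : (1:ℚ) ≤ (l:ℚ) := by exact_mod_cast hl
  have hkq : (1:ℚ) ≤ (k:ℚ) := by exact_mod_cast hk
  set M : ℚ := (m:ℚ)^2 * (l:ℚ) with hMdef
  set P : ℚ := (m:ℚ) + (l:ℚ) + 2 with hPdef
  set K : ℚ := (k:ℚ) + (l:ℚ) + 2 with hKdef
  have hM : 4 ≤ M := by
    have h1 : (4:ℚ) ≤ (m:ℚ)^2 := by nlinarith
    have h2 : (m:ℚ)^2 ≤ (m:ℚ)^2*(l:ℚ) := by nlinarith
    rw [hMdef]; linarith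
  have hK : 4 ≤ K := by rw [hKdef]; linarith
  have hP2 : 0 < P := by rw [hPdef]; linarith
  have hP : P ≤ 2*M := by
    have h1 : 2*(m:ℚ) ≤ (m:ℚ)^2 := by nlinarith
    have h2 : (m:ℚ)^2 ≤ (m:ℚ)^2*(l:ℚ) := by nlinarith
    have h3 : (l:ℚ) ≤ (m:ℚ)^2*(l:ℚ) := by nlinarith
    rw [hPdef, hMdef]; linarith
  have h := arith_gen M P K hM hK hP2 hP
  have e1 : (((m ^ 2 * l * (m + l + 2) + m ^ 2 * l * (k + l + 2) + m + l + 4 : ℕ) : ℚ))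
      = M*P+M*K+P+2 := by push_cast [hMdef, hPdef, hKdef]; ring
  have e2 : (((m ^ 2 * l * (m + l + 2) + m ^ 2 * l * (k + l + 2) + 2 : ℕ) : ℚ))
      = M*P+M*K+2 := by push_cast [hMdef, hPdef, hKdef]; ring
  have e3 : ((m ^ 2 * l * (m + l + 2) : ℕ) : ℚ) = M*P := by
    push_cast [hMdef, hPdef]; ring
  have e4 : ((m ^ 2 * l * (k + l + 2) : ℕ) : ℚ) = M*K := by
    push_cast [hMdef, hKdef]; ring
  rw [e1, e2, e3, e4]
  exact h

end BB

/-- For every set of added edges `A* ⊆ {(t, S_i) : S_i ∈ S}`, every node `v ∉ {t, v_e}`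
of the betweenness-reduction graph satisfies `B(v) < B(t)`; hence the node of maximum
betweenness is always `t` or `v_e`. -/
theorem max_btw_t_or_evader (l m k : ℕ) (hl : 1 ≤ l) (hk : 1 ≤ k) (hkm : k < m)
    (S : Fin m → Finset (Fin l)) (h3 : ∀ i, (S i).card = 3) (A : Finset (Fin m)) :
    let G := Bgraph l m k S A
    let ve : BVert l m k := Sum.inl (Sum.inl ())
    let t : BVert l m k := Sum.inl (Sum.inr ())
    (∀ v : BVert l m k, v ≠ t → v ≠ ve → btw G v < btw G t) ∧
      (∀ v : BVert l m k, (∀ w : BVert l m k, btw G w ≤ btw G v) →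
        v = t ∨ v = ve) := by
  
  intro G ve t
  have part1 : ∀ v : BVert l m k, v ≠ t → v ≠ ve → btw G v < btw G t := by
    intro v hvt hvve
    have hub := BB.btw_v_ub l m k S A v hvt hvve
    have hlb := BB.btw_t_lb l m k S A
    have harith := BB.arith l m k hl hk hkm
    calc btw G v ≤ _ := hub
      _ < _ := harith
      _ ≤ btw G t := hlb
  refine ⟨part1, ?_⟩
  intro v hmax
  by_contra h
  push_neg at h
  obtain ⟨h1, h2⟩ := h
  exact absurd (hmax t) (not_le.mpr (part1 v h1 h2))
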